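/- For p in (0,1], the generalized harmonic number H_{1/p} = sum_{n>=1} (1/n - 1/(n + 1/p)) satisfies H_{1/p} >= 1 + (pi^2/6 - 1) * (-p ln p). -/

import Mathlib

open Real

lemma key_ptwise (x q E : ℝ) (hx : 0 ≤ x) (hq : 1 ≤ q)
    (hE0 : 0 ≤ E) (hE : E * q ≤ q - 1) :
    E / (x+2)^2 ≤ 1/(x+2) - 1/(x+1+q) := by
  have h1 : (0:ℝ) < x + 2 := by linarith
  have h2 : (0:ℝ) < x + 1 + q := by linarith
  have hE' : E ≤ q - 1 := le_trans (le_mul_of_one_le_right hE0 hq) hE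
  rw [div_sub_div _ _ (ne_of_gt h1) (ne_of_gt h2),
    div_le_div_iff₀ (by positivity) (by positivity)]
  nlinarith [mul_le_mul_of_nonneg_right hE' (by positivity : (0:ℝ) ≤ (x+1)*(x+2)),
    mul_le_mul_of_nonneg_right hE (by linarith : (0:ℝ) ≤ x+2)]

lemma tele : HasSum (fun n : ℕ => 1/(n+1:ℝ) - 1/(n+2)) 1 := by
  have hnn : ∀ n : ℕ, 0 ≤ 1/(n+1:ℝ) - 1/(n+2) := by
    intro n
    have : (1:ℝ)/(n+2) ≤ 1/(n+1) := by
      apply one_div_le_one_div_of_le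
      · positivity
      · push_cast; linarith
    linarith
  rw [hasSum_iff_tendsto_nat_of_nonneg hnn]
  have hps : ∀ n : ℕ, ∑ i ∈ Finset.range n, (1/(i+1:ℝ) - 1/(i+2)) = 1 - 1/(n+1) := by
    intro n
    have := Finset.sum_range_sub' (fun i : ℕ => 1/(i+1:ℝ)) n
    rw [show (1:ℝ) - 1/(n+1) = 1/((0:ℕ)+1:ℝ) - 1/(n+1) by norm_num, ← this]
    apply Finset.sum_congr rfl
    intro i _
    push_cast
    ring_nf
  simp only [hps]
  have : Filter.Tendsto (fun n : ℕ => 1/(n+1:ℝ)) Filter.atTop (nhds 0) :=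
    tendsto_one_div_add_atTop_nhds_zero_nat
  simpa using Filter.Tendsto.sub tendsto_const_nhds this

lemma basel2 : HasSum (fun n : ℕ => 1/((n:ℝ)+2)^2) (π^2/6 - 1) := by
  have h2 := (hasSum_nat_add_iff' (f := fun n : ℕ => (1:ℝ)/(n:ℝ)^2) 2).2 hasSum_zeta_two
  simp only [Finset.sum_range_succ, Finset.sum_range_zero] at h2
  norm_num at h2
  convert h2 using 2 with n
  · rfl
  push_cast
  ring

lemma summable_bound (q : ℝ) (hq : 1 ≤ q) :
    Summable (fun n : ℕ => 1/((n:ℝ)+1) - 1/((n:ℝ)+1+q)) := by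
  have hb : Summable (fun n : ℕ => q * (1/((n:ℝ)+1)^2)) := by
    have h0 : Summable (fun n : ℕ => (1:ℝ)/(n:ℝ)^2) := hasSum_zeta_two.summable
    have h1 := (summable_nat_add_iff (f := fun n : ℕ => (1:ℝ)/(n:ℝ)^2) 1).2 h0
    exact (h1.congr (by intro n; push_cast; ring_nf)).mul_left q
  apply Summable.of_nonneg_of_le _ _ hb
  · intro n
    have h1 : (0:ℝ) < (n:ℝ)+1 := by positivity
    have h2 : (0:ℝ) < (n:ℝ)+1+q := by linarith
    have : (1:ℝ)/((n:ℝ)+1+q) ≤ 1/((n:ℝ)+1) := by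
      apply one_div_le_one_div_of_le h1; linarith
    linarith
  · intro n
    have hx : (0:ℝ) ≤ (n:ℝ) := n.cast_nonneg
    have h1 : (0:ℝ) < (n:ℝ)+1 := by positivity
    have h2 : (0:ℝ) < (n:ℝ)+1+q := by linarith
    rw [div_sub_div _ _ (ne_of_gt h1) (ne_of_gt h2), mul_one_div,
      div_le_div_iff₀ (by positivity) (by positivity)]
    nlinarith [mul_nonneg (mul_nonneg (by linarith : (0:ℝ) ≤ q) (by linarith : (0:ℝ) ≤ q)) (le_of_lt h1)]

/-- Single-token expected-score bound: for `p ∈ (0,1]`, the generalized harmonic number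
`H_{1/p} = ∑_{n ≥ 1} (1/n - 1/(n + 1/p))` satisfies
`H_{1/p} ≥ 1 + (π²/6 - 1) (-p log p)`. -/
theorem harmonic_ge_one_add_entropy (p : ℝ) (hp : p ∈ Set.Ioc (0 : ℝ) 1) :
    (∑' n : ℕ, (1 / (n + 1 : ℝ) - 1 / ((n + 1 : ℝ) + 1 / p))) ≥
      1 + (π ^ 2 / 6 - 1) * (-(p * Real.log p)) := by
  obtain ⟨hp0, hp1⟩ := hp
  set E : ℝ := -(p * Real.log p) with hEdef
  set q : ℝ := 1/p with hqdef
  have hq : 1 ≤ q := by rw [hqdef, le_div_iff₀ hp0]; linarith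
  have hq0 : 0 < q := by linarith
  have hE0 : 0 ≤ E := by
    have := Real.log_nonpos (le_of_lt hp0) hp1
    have := mul_nonpos_of_nonneg_of_nonpos (le_of_lt hp0) this
    linarith
  have hEq : E * q ≤ q - 1 := by
    have hlog := Real.log_le_sub_one_of_pos (show (0:ℝ) < 1/p by positivity)
    rw [Real.log_div one_ne_zero (ne_of_gt hp0), Real.log_one] at hlog
    have : E * q = -Real.log p := by
      rw [hEdef, hqdef]; field_simp
    rw [this, ← hqdef] at *
    linarith
  have hh : HasSum (fun n : ℕ => E/((n:ℝ)+2)^2) ((π^2/6 - 1) * E) := by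
    have h := basel2.mul_left E
    rw [show E * (π^2/6 - 1) = (π^2/6 - 1) * E from mul_comm _ _] at h
    convert h using 1
    · rfl
    funext n
    rw [mul_one_div]
  have hah := tele.add hh
  have hf : Summable (fun n : ℕ => 1/((n:ℝ)+1) - 1/((n:ℝ)+1+q)) := summable_bound q hq
  rw [ge_iff_le, show (1:ℝ) + (π^2/6-1)*E = 1 + (π^2/6-1)*E from rfl, ← hah.tsum_eq]
  have : ∀ n : ℕ, (1/((n:ℝ)+1) - 1/((n:ℝ)+2)) + E/((n:ℝ)+2)^2 ≤
      1/((n:ℝ)+1) - 1/((n:ℝ)+1+q) := by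
    intro n
    have := key_ptwise (n:ℝ) q E n.cast_nonneg hq hE0 hEq
    linarith
  exact Summable.tsum_le_tsum this hah.summable hf
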